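/- Fix η₀ > 0 and let (b_{n,m}^{ν,μ}) be reals indexed by admissible quadruples with Σ |b_{n,m}^{ν,μ}| < ∞. Define h(θ,φ) = √(t₀ − cos θ) · Σ b_{n,m}^{ν,μ} Φ_n^ν(θ) Φ_m^μ(φ). Then the surface integral of h over the torus η = η₀ satisfies ∫_{−π}^{π} ∫_{−π}^{π} h(θ,φ) · ( s₀/(t₀ − cos θ)² ) dθ dφ = −8√2 · π · Σ_{n=0}^∞ b_{n,0}^{+1,+1} · q_{n,1}, the series on the right converging absolutely. In particular, the compatibility condition ∫ h dS = 0 for the Neumann problem is equivalent to Σ_{n=0}^∞ q_{n,1} b_{n,0}^{+1,+1} = 0. -/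

import Mathlib

open Real MeasureTheory intervalIntegral Filter Topology

/-- Associated Legendre function of the second kind of half-integer degree,
`Q_{n-1/2}^m(t)`, defined via its real integral representation (valid for `t > 1`). -/
noncomputable def Qh (n m : ℕ) (t : ℝ) : ℝ :=
  ((-1 : ℝ) ^ m / (2 : ℝ) ^ ((n : ℝ) + 1 / 2)) *
    (Real.Gamma ((n : ℝ) + (m : ℝ) + 1 / 2) / Real.Gamma ((n : ℝ) + 1 / 2)) *
    (t ^ 2 - 1) ^ ((m : ℝ) / 2) *
    ∫ s in (-1 : ℝ)..1, (1 - s ^ 2) ^ ((n : ℝ) - 1 / 2) * (t - s) ^ (-((n : ℝ) + (m : ℝ) + 1 / 2))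

/-- `q_{n,m} = Q_{n-1/2}^m(cosh η₀)`. -/
noncomputable def qh (η₀ : ℝ) (n m : ℕ) : ℝ := Qh n m (Real.cosh η₀)

/-- `Φ_n^{+1}(θ) = cos (n θ)`, `Φ_n^{-1}(θ) = sin (n θ)`. -/
noncomputable def Phi (ν : ℤ) (n : ℤ) (θ : ℝ) : ℝ :=
  if ν = 1 then Real.cos ((n : ℝ) * θ) else Real.sin ((n : ℝ) * θ)

/-- A quadruple `(n, m, ν, μ)` is admissible. -/
def Admissible (n m : ℕ) (ν μ : ℤ) : Prop :=
  (ν = 1 ∨ ν = -1) ∧ (μ = 1 ∨ μ = -1) ∧ ¬(n = 0 ∧ ν = -1) ∧ ¬(m = 0 ∧ μ = -1)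

/-- Toroidal Neumann constant `ρ_{n,m}(η₀)` (`n ≥ 1`). -/
noncomputable def rhoT (η₀ : ℝ) (n m : ℕ) : ℝ :=
  if n = 1 then
    (1 / (2 * Real.sinh η₀)) *
      (Real.cosh η₀ + (2 * (m : ℝ) - 1) * qh η₀ 1 m / qh η₀ 0 m)
  else
    (1 / (4 * Real.sinh η₀)) *
      ((2 * (n : ℝ) - 1) * Real.cosh η₀ +
        (2 * ((m : ℝ) - (n : ℝ)) + 1) * qh η₀ n m / qh η₀ (n - 1) m)

/-- Toroidal Neumann constant `σ_{n,m}(η₀)`. -/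
noncomputable def sigmaT (η₀ : ℝ) (n m : ℕ) : ℝ :=
  (-1 / (2 * Real.sinh η₀)) *
    ((2 * (n : ℝ) * Real.cosh η₀ ^ 2 + 1) +
      (2 * ((m : ℝ) - (n : ℝ)) - 1) * Real.cosh η₀ * qh η₀ (n + 1) m / qh η₀ n m)

/-- Toroidal Neumann constant `τ_{n,m}(η₀)`. -/
noncomputable def tauT (η₀ : ℝ) (n m : ℕ) : ℝ :=
  (1 / (4 * Real.sinh η₀)) *
    ((2 * (n : ℝ) + 3) * Real.cosh η₀ +
      (2 * ((m : ℝ) - (n : ℝ)) - 3) * qh η₀ (n + 2) m / qh η₀ (n + 1) m)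

/-- The normal derivative `N_{n,m}^{ν,μ}(θ,φ)` of the interior toroidal harmonic
`I_{n,m}^{ν,μ}` on the torus `η = η₀`. -/
noncomputable def NDer (η₀ : ℝ) (n m : ℕ) (ν μ : ℤ) (θ φ : ℝ) : ℝ :=
  (Real.sqrt (Real.cosh η₀ - Real.cos θ) / (4 * Real.sinh η₀)) * Phi μ (m : ℤ) φ *
    (Phi ν ((n : ℤ) - 1) θ *
        ((1 + 2 * (n : ℝ)) * Real.cosh η₀ -
          (2 * ((n : ℝ) - (m : ℝ)) + 1) * qh η₀ (n + 1) m / qh η₀ n m) -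
      2 * Phi ν (n : ℤ) θ *
        ((2 * (n : ℝ) * Real.cosh η₀ ^ 2 + 1) -
          (2 * ((n : ℝ) - (m : ℝ)) + 1) * Real.cosh η₀ * qh η₀ (n + 1) m / qh η₀ n m) +
      Phi ν ((n : ℤ) + 1) θ *
        ((1 + 2 * (n : ℝ)) * Real.cosh η₀ -
          (2 * ((n : ℝ) - (m : ℝ)) + 1) * qh η₀ (n + 1) m / qh η₀ n m))

/-- Interior toroidal harmonic `I_{n,m}^{ν,μ}[η₀]` in toroidal coordinates. -/
noncomputable def Ih (η₀ : ℝ) (n m : ℕ) (ν μ : ℤ) (η θ φ : ℝ) : ℝ :=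
  Real.sqrt (Real.cosh η - Real.cos θ) *
    (Qh n m (Real.cosh η) / Qh n m (Real.cosh η₀)) * Phi ν (n : ℤ) θ * Phi μ (m : ℤ) φ


section auxCompat
open Real MeasureTheory intervalIntegral Set

noncomputable def Ith (t : ℝ) (k : ℕ) (c : ℝ) : ℝ :=
  ∫ θ in (0:ℝ)..π, (Real.sin θ) ^ (2 * k) * (t - Real.cos θ) ^ (-c)

noncomputable def Jf (t : ℝ) (n : ℕ) : ℝ := Ith t n ((n:ℝ) + 3/2)
noncomputable def Mf (t : ℝ) (n : ℕ) : ℝ := Ith t n ((n:ℝ) + 1/2)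
noncomputable def Lf (t : ℝ) (n : ℕ) : ℝ := Ith t n ((n:ℝ) - 1/2)

noncomputable def Af (t : ℝ) (n : ℕ) : ℝ :=
  ∫ θ in (-π)..π, Real.cos ((n:ℝ) * θ) * (t - Real.cos θ) ^ (-(3/2 : ℝ))
noncomputable def Pf (t : ℝ) (n : ℕ) : ℝ :=
  ∫ θ in (-π)..π, Real.cos ((n:ℝ) * θ) * (t - Real.cos θ) ^ (-(1/2 : ℝ))

lemma integral_even_split {g : ℝ → ℝ} (hc : Continuous g) (he : ∀ x, g (-x) = g x) :
    ∫ x in (-π)..π, g x = 2 * ∫ x in (0:ℝ)..π, g x := by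
  have h0 : (∫ x in (0:ℝ)..π, g (-x)) = ∫ x in (-π)..(0:ℝ), g x := by
    simpa using intervalIntegral.integral_comp_neg (a := (0:ℝ)) (b := π) g
  have h1 : (∫ x in (-π)..(0:ℝ), g x) = ∫ x in (0:ℝ)..π, g x := by
    rw [← h0]; exact intervalIntegral.integral_congr (fun x _ => he x)
  have h2 := intervalIntegral.integral_add_adjacent_intervals
    (hc.intervalIntegrable (μ := volume) (-π) 0) (hc.intervalIntegrable (μ := volume) 0 π)
  rw [h1] at h2; linarith

lemma integral_odd_zero {g : ℝ → ℝ} (hc : Continuous g) (he : ∀ x, g (-x) = -g x) :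
    ∫ x in (-π)..π, g x = 0 := by
  have h0 : (∫ x in (0:ℝ)..π, g (-x)) = ∫ x in (-π)..(0:ℝ), g x := by
    simpa using intervalIntegral.integral_comp_neg (a := (0:ℝ)) (b := π) g
  have h1 : (∫ x in (-π)..(0:ℝ), g x) = -∫ x in (0:ℝ)..π, g x := by
    rw [← h0, ← intervalIntegral.integral_neg]
    exact intervalIntegral.integral_congr (fun x _ => he x)
  have h2 := intervalIntegral.integral_add_adjacent_intervals
    (hc.intervalIntegrable (μ := volume) (-π) 0) (hc.intervalIntegrable (μ := volume) 0 π)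
  rw [h1] at h2; linarith

lemma cos_image_Ioo : Real.cos '' Ioo 0 π = Ioo (-1 : ℝ) 1 := by
  ext s
  constructor
  · rintro ⟨θ, hθ, rfl⟩
    constructor
    · have := Real.strictAntiOn_cos
        ⟨hθ.1.le, hθ.2.le⟩ ⟨Real.pi_pos.le, le_refl π⟩ hθ.2
      simpa [Real.cos_pi] using this
    · have := Real.strictAntiOn_cos
        ⟨le_refl 0, Real.pi_pos.le⟩ ⟨hθ.1.le, hθ.2.le⟩ hθ.1
      simpa [Real.cos_zero] using this
  · intro hs
    refine ⟨Real.arccos s, ⟨Real.arccos_pos.mpr hs.2, ?_⟩, Real.cos_arccos hs.1.le hs.2.le⟩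
    rcases lt_or_eq_of_le (Real.arccos_le_pi s) with h | h
    · exact h
    · exact absurd (Real.arccos_eq_pi.mp h) (by linarith [hs.1])

/-- Change of variables `s = cos θ`. -/
lemma subst_cos {t : ℝ} (ht : 1 < t) (n : ℕ) (c : ℝ) :
    (∫ s in (-1:ℝ)..1, (1 - s^2) ^ ((n:ℝ) - 1/2) * (t - s) ^ (-c)) = Ith t n c := by
  have hmeas : MeasurableSet (Ioo (0:ℝ) π) := measurableSet_Ioo
  have hderiv : ∀ x ∈ Ioo (0:ℝ) π,
      HasDerivWithinAt Real.cos (-Real.sin x) (Ioo (0:ℝ) π) x :=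
    fun x _ => (Real.hasDerivAt_cos x).hasDerivWithinAt
  have hinj : InjOn Real.cos (Ioo (0:ℝ) π) := Real.injOn_cos.mono Ioo_subset_Icc_self
  have himg := MeasureTheory.integral_image_eq_integral_abs_deriv_smul hmeas hderiv hinj
    (fun s => (1 - s^2) ^ ((n:ℝ) - 1/2) * (t - s) ^ (-c))
  rw [cos_image_Ioo] at himg
  rw [intervalIntegral.integral_of_le (by norm_num : (-1:ℝ) ≤ 1),
    MeasureTheory.integral_Ioc_eq_integral_Ioo, himg,
    Ith, intervalIntegral.integral_of_le Real.pi_pos.le,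
    MeasureTheory.integral_Ioc_eq_integral_Ioo]
  refine MeasureTheory.setIntegral_congr_fun hmeas (fun θ hθ => ?_)
  have hsin : 0 < Real.sin θ := Real.sin_pos_of_pos_of_lt_pi hθ.1 hθ.2
  have h1 : (1 : ℝ) - Real.cos θ ^ 2 = Real.sin θ ^ 2 := by
    have := Real.sin_sq_add_cos_sq θ; linarith
  have h2 : ((Real.sin θ) ^ 2 : ℝ) ^ ((n:ℝ) - 1/2) = (Real.sin θ) ^ (2 * ((n:ℝ) - 1/2)) := by
    rw [← Real.rpow_natCast (Real.sin θ) 2, ← Real.rpow_mul hsin.le]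
    norm_num
  have h3 : |(-Real.sin θ)| = Real.sin θ := by rw [abs_neg, abs_of_pos hsin]
  rw [smul_eq_mul, h3, h1, h2]
  have h4 : Real.sin θ * (Real.sin θ) ^ (2 * ((n:ℝ) - 1/2))
      = (Real.sin θ) ^ ((2 * n : ℕ) : ℝ) := by
    nth_rewrite 1 [← Real.rpow_one (Real.sin θ)]
    rw [← Real.rpow_add hsin]
    push_cast
    ring_nf
  rw [← mul_assoc, h4, Real.rpow_natCast]



section core
variable {t : ℝ} (ht : 1 < t)
include ht

lemma tc_pos (θ : ℝ) : 0 < t - Real.cos θ := by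
  have := Real.cos_le_one θ; linarith

lemma cont_base (k : ℕ) (c : ℝ) :
    Continuous (fun θ : ℝ => (Real.sin θ) ^ (2 * k) * (t - Real.cos θ) ^ (-c)) := by
  refine (Continuous.pow (Real.continuous_sin) _).mul ?_
  exact Continuous.rpow_const (by continuity) (fun θ => Or.inl (ne_of_gt (tc_pos ht θ)))

lemma cont_mid (k : ℕ) (c : ℝ) :
    Continuous (fun θ : ℝ =>
      (Real.sin θ) ^ (2 * k) * Real.cos θ * (t - Real.cos θ) ^ (-c)) := by
  refine (Continuous.mul (by continuity) Real.continuous_cos).mul ?_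
  exact Continuous.rpow_const (by continuity) (fun θ => Or.inl (ne_of_gt (tc_pos ht θ)))

/-- Relates the `cos θ`-weighted integral to `Ith`. -/
lemma mid_eq (k : ℕ) (c : ℝ) :
    (∫ θ in (0:ℝ)..π, (Real.sin θ) ^ (2 * k) * Real.cos θ * (t - Real.cos θ) ^ (-c))
      = t * Ith t k c - Ith t k (c - 1) := by
  have h1 : ∀ θ : ℝ, (Real.sin θ) ^ (2 * k) * Real.cos θ * (t - Real.cos θ) ^ (-c)
      = t * ((Real.sin θ) ^ (2 * k) * (t - Real.cos θ) ^ (-c))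
        - (Real.sin θ) ^ (2 * k) * (t - Real.cos θ) ^ (-(c - 1)) := by
    intro θ
    have hv := tc_pos ht (t := t) θ
    have : (t - Real.cos θ) ^ (-(c-1)) = (t - Real.cos θ) * (t - Real.cos θ) ^ (-c) := by
      rw [show -(c-1) = 1 + (-c) by ring, Real.rpow_add hv, Real.rpow_one]
    rw [this]; ring
  rw [intervalIntegral.integral_congr (g := fun θ => t * ((Real.sin θ) ^ (2 * k) * (t - Real.cos θ) ^ (-c))
        - (Real.sin θ) ^ (2 * k) * (t - Real.cos θ) ^ (-(c - 1))) (fun θ _ => h1 θ)]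
  rw [intervalIntegral.integral_sub ((continuous_const.fun_mul (cont_base ht k c)).intervalIntegrable _ _)
      ((cont_base ht k (c-1)).intervalIntegrable _ _), intervalIntegral.integral_const_mul]
  rfl

/-- Master integration-by-parts identity. -/
lemma starIBP (k : ℕ) (c : ℝ) :
    (2 * (k:ℝ) + 1) * (t * Ith t k c - Ith t k (c - 1)) = c * Ith t (k + 1) (c + 1) := by
  have key : ∀ θ : ℝ, HasDerivAt (fun θ => (Real.sin θ) ^ (2 * k + 1) * (t - Real.cos θ) ^ (-c))
      ((2 * (k:ℝ) + 1) * ((Real.sin θ) ^ (2 * k) * Real.cos θ * (t - Real.cos θ) ^ (-c))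
        - c * ((Real.sin θ) ^ (2 * (k+1)) * (t - Real.cos θ) ^ (-(c + 1)))) θ := by
    intro θ
    have hv := tc_pos ht (t := t) θ
    have hs : HasDerivAt (fun θ : ℝ => (Real.sin θ) ^ (2 * k + 1))
        ((2 * (k:ℝ) + 1) * (Real.sin θ) ^ (2 * k) * Real.cos θ) θ := by
      have := (Real.hasDerivAt_sin θ).pow (2 * k + 1)
      simpa [Nat.add_sub_cancel, mul_comm, mul_assoc, mul_left_comm, Pi.pow_def] using this
    have hr : HasDerivAt (fun θ : ℝ => (t - Real.cos θ) ^ (-c))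
        ((-c) * (t - Real.cos θ) ^ (-c - 1) * Real.sin θ) θ := by
      have hb : HasDerivAt (fun θ : ℝ => t - Real.cos θ) (Real.sin θ) θ := by
        simpa using ((Real.hasDerivAt_cos θ).const_sub t)
      have := (Real.hasDerivAt_rpow_const (x := t - Real.cos θ) (p := -c)
        (Or.inl (ne_of_gt hv))).comp θ hb
      simpa [mul_comm, mul_assoc, Function.comp_def] using this
    have := hs.fun_mul hr
    refine this.congr_deriv ?_
    have e1 : (t - Real.cos θ) ^ (-c - 1) = (t - Real.cos θ) ^ (-(c+1)) := by ring_nf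
    have e2 : (Real.sin θ) ^ (2 * (k+1)) = (Real.sin θ) ^ (2*k+1) * Real.sin θ := by ring
    rw [e1, e2]; ring
  have hint : IntervalIntegrable (fun θ : ℝ =>
      (2 * (k:ℝ) + 1) * ((Real.sin θ) ^ (2 * k) * Real.cos θ * (t - Real.cos θ) ^ (-c))
        - c * ((Real.sin θ) ^ (2 * (k+1)) * (t - Real.cos θ) ^ (-(c + 1)))) volume 0 π := by
    exact ((continuous_const.mul (cont_mid ht k c)).sub (continuous_const.mul (cont_base ht (k+1) (c+1)))).intervalIntegrable _ _
  have hftc := intervalIntegral.integral_eq_sub_of_hasDerivAt (fun x _ => key x) hint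
  rw [intervalIntegral.integral_sub ((continuous_const.fun_mul (cont_mid ht k c)).intervalIntegrable _ _)
      ((continuous_const.fun_mul (cont_base ht (k+1) (c+1))).intervalIntegrable _ _),
    intervalIntegral.integral_const_mul, intervalIntegral.integral_const_mul] at hftc
  rw [Real.sin_pi, Real.sin_zero] at hftc
  simp only [zero_pow (Nat.succ_ne_zero _), zero_mul, sub_zero] at hftc
  rw [← mid_eq ht k c]
  have : Ith t (k+1) (c+1) = ∫ θ in (0:ℝ)..π, (Real.sin θ) ^ (2 * (k+1)) * (t - Real.cos θ) ^ (-(c+1)) := rfl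
  rw [this]
  linarith [hftc]

lemma R1 (n : ℕ) :
    (2 * (n:ℝ) + 1) * (t * Jf t n - Mf t n) = ((n:ℝ) + 3/2) * Jf t (n + 1) := by
  have h := starIBP (t := t) ht n ((n:ℝ) + 3/2)
  have e1 : (n:ℝ) + 3/2 - 1 = (n:ℝ) + 1/2 := by ring
  have e2 : (n:ℝ) + 3/2 + 1 = ((n+1:ℕ):ℝ) + 3/2 := by push_cast; ring
  rw [e1, e2] at h
  exact h

lemma starM (n : ℕ) :
    (2 * (n:ℝ) + 1) * (t * Mf t n - Lf t n) = ((n:ℝ) + 1/2) * Mf t (n + 1) := by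
  have h := starIBP (t := t) ht n ((n:ℝ) + 1/2)
  have e1 : (n:ℝ) + 1/2 - 1 = (n:ℝ) - 1/2 := by ring
  have e2 : (n:ℝ) + 1/2 + 1 = ((n+1:ℕ):ℝ) + 1/2 := by push_cast; ring
  rw [e1, e2] at h
  exact h

/-- Expansion `M_{n+1} = (1-t²) J_n + 2t M_n - L_n`. -/
lemma Mexp (n : ℕ) :
    Mf t (n + 1) = (1 - t^2) * Jf t n + 2 * t * Mf t n - Lf t n := by
  have hpt : ∀ θ : ℝ, (Real.sin θ) ^ (2 * (n+1)) * (t - Real.cos θ) ^ (-(((n+1:ℕ):ℝ) + 1/2))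
      = (1 - t^2) * ((Real.sin θ) ^ (2*n) * (t - Real.cos θ) ^ (-((n:ℝ) + 3/2)))
        + 2 * t * ((Real.sin θ) ^ (2*n) * (t - Real.cos θ) ^ (-((n:ℝ) + 1/2)))
        - (Real.sin θ) ^ (2*n) * (t - Real.cos θ) ^ (-((n:ℝ) - 1/2)) := by
    intro θ
    have hv := tc_pos (t := t) ht θ
    set v := t - Real.cos θ with hvdef
    have hsin : (Real.sin θ) ^ (2 * (n+1)) = (1 - (Real.cos θ)^2) * (Real.sin θ) ^ (2*n) := by
      rw [← Real.sin_sq θ]; ring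
    have hcos : 1 - (Real.cos θ)^2 = (1 - t^2) + 2*t*v - v^2 := by rw [hvdef]; ring
    have hv1 : v ^ (-((n:ℝ) + 1/2)) = v * v ^ (-((n:ℝ) + 3/2)) := by
      rw [show -((n:ℝ)+1/2) = 1 + -((n:ℝ)+3/2) by ring, Real.rpow_add hv, Real.rpow_one]
    have hv2 : v ^ (-((n:ℝ) - 1/2)) = v^2 * v ^ (-((n:ℝ) + 3/2)) := by
      rw [show -((n:ℝ)-1/2) = 2 + -((n:ℝ)+3/2) by ring, Real.rpow_add hv,
        show ((2:ℝ):ℝ) = ((2:ℕ):ℝ) by norm_num, Real.rpow_natCast]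
    have hv3 : (-(((n+1:ℕ):ℝ) + 1/2)) = -((n:ℝ) + 3/2) := by push_cast; ring
    rw [hv3, hsin, hcos, hv1, hv2]; ring
  have : Mf t (n+1) = ∫ θ in (0:ℝ)..π,
      ((1 - t^2) * ((Real.sin θ) ^ (2*n) * (t - Real.cos θ) ^ (-((n:ℝ) + 3/2)))
        + 2 * t * ((Real.sin θ) ^ (2*n) * (t - Real.cos θ) ^ (-((n:ℝ) + 1/2)))
        - (Real.sin θ) ^ (2*n) * (t - Real.cos θ) ^ (-((n:ℝ) - 1/2))) := by
    exact intervalIntegral.integral_congr (fun θ _ => hpt θ)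
  rw [this, intervalIntegral.integral_sub, intervalIntegral.integral_add,
    intervalIntegral.integral_const_mul, intervalIntegral.integral_const_mul]
  · rfl
  · exact (continuous_const.mul (cont_base (t := t) ht n _)).intervalIntegrable _ _
  · exact (continuous_const.mul (cont_base (t := t) ht n _)).intervalIntegrable _ _
  · exact ((continuous_const.mul (cont_base (t := t) ht n _)).add
      (continuous_const.mul (cont_base (t := t) ht n _))).intervalIntegrable _ _
  · exact (cont_base (t := t) ht n _).intervalIntegrable _ _

lemma R2 (n : ℕ) : Lf t n = (t^2 - 1) * Jf t n := by
  have h1 := starM (t := t) ht n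
  have h2 := Mexp (t := t) ht n
  have key : ((n:ℝ)+1/2) * (Lf t n - (t^2-1)*Jf t n) = 0 := by
    linear_combination (-1 : ℝ) * h1 - ((n:ℝ)+1/2) * h2
  have hne : ((n:ℝ)+1/2) ≠ 0 := by positivity
  have := (mul_eq_zero.mp key).resolve_left hne
  linarith

lemma IV (n : ℕ) : Mf t (n + 1) = 2 * t * Mf t n - 2 * (t^2 - 1) * Jf t n := by
  rw [Mexp ht n, R2 ht n]; ring

lemma Jrec (n : ℕ) :
    (2*(n:ℝ)+1) * (2*(n:ℝ)+5) * Jf t (n+2) =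
      8 * ((n:ℝ)+1) * t * (2*(n:ℝ)+3) * Jf t (n+1) - 4 * (2*(n:ℝ)+3) * (2*(n:ℝ)+1) * Jf t n := by
  have e1 := R1 (t := t) ht n
  have e2 := R1 (t := t) ht (n+1)
  have e3 := IV (t := t) ht n
  push_cast at e2
  linear_combination 4*t*(2*(n:ℝ)+3) * e1 - 2*(2*(n:ℝ)+1) * e2 - 2*(2*(n:ℝ)+1)*(2*(n:ℝ)+3) * e3

lemma cont_tc (c : ℝ) : Continuous (fun θ : ℝ => (t - Real.cos θ) ^ (-c)) :=
  Continuous.rpow_const (by continuity) (fun θ => Or.inl (ne_of_gt (tc_pos ht θ)))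

lemma cont_cos_tc (a c : ℝ) :
    Continuous (fun θ : ℝ => Real.cos (a * θ) * (t - Real.cos θ) ^ (-c)) :=
  (Real.continuous_cos.comp (continuous_const.mul continuous_id)).mul (cont_tc ht c)

lemma hasDerivAt_tc (c : ℝ) (θ : ℝ) :
    HasDerivAt (fun θ : ℝ => (t - Real.cos θ) ^ (-c))
      ((-c) * (t - Real.cos θ) ^ (-(c+1)) * Real.sin θ) θ := by
  have hb : HasDerivAt (fun θ : ℝ => t - Real.cos θ) (Real.sin θ) θ := by
    simpa using ((Real.hasDerivAt_cos θ).const_sub t)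
  have := (Real.hasDerivAt_rpow_const (x := t - Real.cos θ) (p := -c)
    (Or.inl (ne_of_gt (tc_pos ht θ)))).comp θ hb
  have he : -c - 1 = -(c+1) := by ring
  simpa [Function.comp_def, he, mul_comm, mul_assoc] using this

omit ht in
lemma hasDerivAt_sin_mul (a θ : ℝ) :
    HasDerivAt (fun θ : ℝ => Real.sin (a * θ)) (Real.cos (a * θ) * a) θ := by
  have h0 : HasDerivAt (fun x : ℝ => a * x) a θ := by simpa using (hasDerivAt_id θ).const_mul a
  exact (Real.hasDerivAt_sin (a * θ)).comp θ h0

/-- Periodic integration by parts: `(n+1) P_{n+1} = (A_n - A_{n+2})/4`. -/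
lemma Arel1 (n : ℕ) :
    ((n:ℝ) + 1) * Pf t (n+1) = (Af t n - Af t (n+2)) / 4 := by
  set a : ℝ := (n:ℝ) + 1 with ha
  have key : ∀ θ : ℝ, HasDerivAt (fun θ => Real.sin (a * θ) * (t - Real.cos θ) ^ (-(1/2:ℝ)))
      (a * (Real.cos (a * θ) * (t - Real.cos θ) ^ (-(1/2:ℝ)))
        - (1/4) * (Real.cos (((n:ℝ)) * θ) * (t - Real.cos θ) ^ (-(3/2:ℝ)))
        + (1/4) * (Real.cos (((n:ℝ)+2) * θ) * (t - Real.cos θ) ^ (-(3/2:ℝ)))) θ := by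
    intro θ
    have hmul := (hasDerivAt_sin_mul a θ).fun_mul (hasDerivAt_tc ht (1/2) θ)
    rw [show (1/2:ℝ) + 1 = 3/2 by norm_num] at hmul
    refine hmul.congr_deriv ?_
    have htrig : Real.sin (a * θ) * Real.sin θ
        = (Real.cos ((n:ℝ) * θ) - Real.cos (((n:ℝ)+2) * θ)) / 2 := by
      have h1 : ((n:ℝ)) * θ = a * θ - θ := by rw [ha]; ring
      have h2 : ((n:ℝ)+2) * θ = a * θ + θ := by rw [ha]; ring
      rw [h1, h2, Real.cos_sub, Real.cos_add]; ring
    have expand : Real.cos (a*θ) * a * (t - Real.cos θ) ^ (-(1/2:ℝ))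
        + Real.sin (a * θ) * ((-(1/2:ℝ)) * (t - Real.cos θ) ^ (-(3/2:ℝ)) * Real.sin θ)
        = a * (Real.cos (a * θ) * (t - Real.cos θ) ^ (-(1/2:ℝ)))
          - (1/2) * ((Real.sin (a*θ) * Real.sin θ) * (t - Real.cos θ) ^ (-(3/2:ℝ))) := by ring
    rw [expand, htrig]; ring
  have i1 : IntervalIntegrable (fun θ : ℝ => a * (Real.cos (a*θ) * (t - Real.cos θ) ^ (-(1/2:ℝ)))) volume (-π) π :=
    (continuous_const.mul (cont_cos_tc ht a (1/2))).intervalIntegrable _ _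
  have i2 : IntervalIntegrable (fun θ : ℝ => (1/4) * (Real.cos ((n:ℝ)*θ) * (t - Real.cos θ) ^ (-(3/2:ℝ)))) volume (-π) π :=
    (continuous_const.mul (cont_cos_tc ht (n:ℝ) (3/2))).intervalIntegrable _ _
  have i3 : IntervalIntegrable (fun θ : ℝ => (1/4) * (Real.cos (((n:ℝ)+2)*θ) * (t - Real.cos θ) ^ (-(3/2:ℝ)))) volume (-π) π :=
    (continuous_const.mul (cont_cos_tc ht ((n:ℝ)+2) (3/2))).intervalIntegrable _ _
  have hftc := intervalIntegral.integral_eq_sub_of_hasDerivAt (fun x _ => key x)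
    (((i1.sub i2).add i3))
  rw [intervalIntegral.integral_add (i1.sub i2) i3, intervalIntegral.integral_sub i1 i2,
    intervalIntegral.integral_const_mul, intervalIntegral.integral_const_mul,
    intervalIntegral.integral_const_mul] at hftc
  have hz1 : Real.sin (a * π) = 0 := by
    rw [show a * π = ((n+1 : ℤ) : ℝ) * π by push_cast [ha]; ring]; exact Real.sin_int_mul_pi _
  have hz2 : Real.sin (a * (-π)) = 0 := by
    rw [show a * (-π) = ((-(n+1) : ℤ) : ℝ) * π by push_cast [ha]; ring]
    exact Real.sin_int_mul_pi _
  rw [hz1, hz2] at hftc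
  have hP : (∫ θ in (-π)..π, Real.cos (a * θ) * (t - Real.cos θ) ^ (-(1/2:ℝ))) = Pf t (n+1) :=
    intervalIntegral.integral_congr (μ := volume) (fun θ _ => by rw [ha]; push_cast; ring_nf)
  have hA2 : (∫ θ in (-π)..π, Real.cos (((n:ℝ)+2) * θ) * (t - Real.cos θ) ^ (-(3/2:ℝ)))
      = Af t (n+2) :=
    intervalIntegral.integral_congr (μ := volume) (fun θ _ => by push_cast; ring_nf)
  rw [hP, hA2] at hftc
  have : a * Pf t (n+1) - (1/4) * Af t n + (1/4) * Af t (n+2) = 0 := by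
    simpa [Af] using hftc
  rw [ha] at this ⊢; linarith

/-- `t A_{n+1} - (A_{n+2} + A_n)/2 = P_{n+1}`. -/
lemma Arel2 (n : ℕ) :
    t * Af t (n+1) - (Af t (n+2) + Af t n) / 2 = Pf t (n+1) := by
  have hpt : ∀ θ : ℝ, Real.cos (((n+1:ℕ):ℝ) * θ) * (t - Real.cos θ) ^ (-(1/2:ℝ))
      = t * (Real.cos (((n+1:ℕ):ℝ) * θ) * (t - Real.cos θ) ^ (-(3/2:ℝ)))
        - ((Real.cos (((n+2:ℕ):ℝ) * θ) * (t - Real.cos θ) ^ (-(3/2:ℝ)))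
            + (Real.cos (((n:ℕ):ℝ) * θ) * (t - Real.cos θ) ^ (-(3/2:ℝ)))) / 2 := by
    intro θ
    have hv := tc_pos ht θ
    have hv1 : (t - Real.cos θ) ^ (-(1/2:ℝ)) = (t - Real.cos θ) * (t - Real.cos θ) ^ (-(3/2:ℝ)) := by
      rw [show -(1/2:ℝ) = 1 + -(3/2:ℝ) by norm_num, Real.rpow_add hv, Real.rpow_one]
    have htrig : Real.cos θ * Real.cos (((n+1:ℕ):ℝ) * θ)
        = (Real.cos (((n+2:ℕ):ℝ) * θ) + Real.cos (((n:ℕ):ℝ) * θ)) / 2 := by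
      have h1 : (((n+2:ℕ)):ℝ) * θ = ((n+1:ℕ):ℝ) * θ + θ := by push_cast; ring
      have h2 : (((n:ℕ)):ℝ) * θ = ((n+1:ℕ):ℝ) * θ - θ := by push_cast; ring
      rw [h1, h2, Real.cos_add, Real.cos_sub]; ring
    rw [hv1]
    linear_combination (-((t - Real.cos θ) ^ (-(3/2:ℝ)))) * htrig
  have i1 := (cont_cos_tc ht ((n+1:ℕ):ℝ) (3/2)).intervalIntegrable (μ := volume) (-π) π
  have i2 := (cont_cos_tc ht ((n+2:ℕ):ℝ) (3/2)).intervalIntegrable (μ := volume) (-π) π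
  have i3 := (cont_cos_tc ht ((n:ℕ):ℝ) (3/2)).intervalIntegrable (μ := volume) (-π) π
  have step := intervalIntegral.integral_congr (μ := volume) (a := -π) (b := π)
    (fun θ _ => hpt θ)
  rw [intervalIntegral.integral_sub (i1.const_mul t) (((i2.add i3).div_const 2)),
    intervalIntegral.integral_const_mul, intervalIntegral.integral_div,
    intervalIntegral.integral_add i2 i3] at step
  exact step.symm

/-- Three-term recurrence for `A`. -/
lemma Arec (n : ℕ) :
    (2*(n:ℝ)+1) * Af t (n+2) = 4*((n:ℝ)+1)*t*Af t (n+1) - (2*(n:ℝ)+3)*Af t n := by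
  have h1 := Arel1 ht n
  have h2 := Arel2 ht n
  linear_combination (-4*((n:ℝ)+1)) * h2 - 4 * h1

lemma Af_zero : Af t 0 = 2 * Jf t 0 := by
  have h1 : Af t 0 = ∫ θ in (-π)..π, (t - Real.cos θ) ^ (-(3/2:ℝ)) := by
    refine intervalIntegral.integral_congr (fun θ _ => ?_)
    norm_num
  rw [h1, integral_even_split (cont_tc ht (3/2)) (fun x => by rw [Real.cos_neg])]
  have h2 : Jf t 0 = ∫ θ in (0:ℝ)..π, (t - Real.cos θ) ^ (-(3/2:ℝ)) := by
    rw [Jf, show ((0:ℕ):ℝ) + 3/2 = (3/2:ℝ) by norm_num, Ith]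
    exact intervalIntegral.integral_congr (fun θ _ => by norm_num)
  rw [h2]

lemma Af_one : Af t 1 = 3 * Jf t 1 := by
  have h1 : Af t 1 = ∫ θ in (-π)..π, Real.cos (1 * θ) * (t - Real.cos θ) ^ (-(3/2:ℝ)) := by
    refine intervalIntegral.integral_congr (fun θ _ => by norm_num)
  rw [h1, integral_even_split (cont_cos_tc ht 1 (3/2))
    (fun x => by rw [mul_neg, Real.cos_neg, Real.cos_neg])]
  have h2 : (∫ θ in (0:ℝ)..π, Real.cos (1 * θ) * (t - Real.cos θ) ^ (-(3/2:ℝ)))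
      = ∫ θ in (0:ℝ)..π, (Real.sin θ) ^ (2 * 0) * Real.cos θ * (t - Real.cos θ) ^ (-(3/2:ℝ)) := by
    refine intervalIntegral.integral_congr (fun θ _ => by norm_num)
  rw [h2, mid_eq ht 0 (3/2)]
  have h3 := starIBP ht 0 (3/2)
  rw [show (3/2:ℝ) - 1 = 1/2 by norm_num, show (3/2:ℝ) + 1 = 5/2 by norm_num] at h3
  have h4 : Jf t 1 = Ith t 1 (5/2) := by rw [Jf]; norm_num
  rw [h4]
  have h5 : (2 * ((0:ℕ):ℝ) + 1) = 1 := by norm_num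
  rw [h5, one_mul] at h3
  rw [show (3/2:ℝ) - 1 = 1/2 from by norm_num] at *
  linarith [h3]

lemma key_ind : ∀ n : ℕ, (2:ℝ)^n * Af t n = 2 * (2*(n:ℝ)+1) * Jf t n := by
  have H : ∀ n : ℕ, (2:ℝ)^n * Af t n = 2 * (2*(n:ℝ)+1) * Jf t n ∧
      (2:ℝ)^(n+1) * Af t (n+1) = 2 * (2*((n:ℝ)+1)+1) * Jf t (n+1) := by
    intro n
    induction n with
    | zero =>
      constructor
      · simpa using Af_zero ht
      · have := Af_one ht
        norm_num [this]; ring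
    | succ k ih =>
      refine ⟨by simpa [Nat.cast_succ] using ih.2, ?_⟩
      have hA := Arec ht k
      have hJ := Jrec ht k
      have h1 := ih.1
      have h2 := ih.2
      set c : ℝ := (2:ℝ)^k with hc
      have e1 : (2:ℝ)^(k+1) = 2*c := by rw [hc, pow_succ]; ring
      have e2 : (2:ℝ)^(k+1+1) = 4*c := by rw [hc, pow_succ, pow_succ]; ring
      rw [e1] at h2
      show (2:ℝ)^(k+2) * Af t (k+2) = 2 * (2*(((k+1:ℕ):ℝ)+1)+1) * Jf t (k+2)
      rw [e2]
      push_cast at h1 h2 hA hJ ⊢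
      have hne : (2*(k:ℝ)+1) ≠ 0 := by positivity
      refine mul_left_cancel₀ hne ?_
      linear_combination 4*c*hA - 2*hJ + 8*((k:ℝ)+1)*t*h2 - 4*(2*(k:ℝ)+3)*h1
  exact fun n => (H n).1
end core
end auxCompat


section auxCompat2
open Real MeasureTheory intervalIntegral Set

lemma Phi_continuous (ν : ℤ) (n : ℤ) : Continuous (Phi ν n) := by
  unfold Phi
  split
  · exact Real.continuous_cos.comp (continuous_const.mul continuous_id)
  · exact Real.continuous_sin.comp (continuous_const.mul continuous_id)

lemma Phi_abs_le (ν : ℤ) (n : ℤ) (x : ℝ) : |Phi ν n x| ≤ 1 := by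
  unfold Phi
  split
  · exact Real.abs_cos_le_one _
  · exact Real.abs_sin_le_one _

lemma Phi_one_eq (m : ℕ) (x : ℝ) : Phi 1 (m:ℤ) x = Real.cos ((m:ℝ) * x) := by
  unfold Phi; rw [if_pos rfl, Int.cast_natCast]

lemma Phi_neg_one_eq (m : ℕ) (x : ℝ) : Phi (-1) (m:ℤ) x = Real.sin ((m:ℝ) * x) := by
  unfold Phi; rw [if_neg (by decide), Int.cast_natCast]

/-- `∫_{-π}^{π} Φ_m^μ(φ) dφ`. -/
lemma phi_integral (μ : ℤ) (m : ℕ) (hμ : μ = 1 ∨ μ = -1) :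
    (∫ φ in (-π)..π, Phi μ (m:ℤ) φ) = if μ = 1 ∧ m = 0 then 2 * π else 0 := by
  rcases hμ with h | h
  · subst h
    rw [intervalIntegral.integral_congr (g := fun x => Real.cos ((m:ℝ) * x))
      (fun x _ => Phi_one_eq m x)]
    by_cases hm : m = 0
    · subst hm
      rw [if_pos ⟨rfl, rfl⟩]
      simp only [Nat.cast_zero, zero_mul, Real.cos_zero]
      rw [intervalIntegral.integral_const]
      simp only [smul_eq_mul, mul_one]
      ring
    · rw [if_neg (fun hcon => hm hcon.2)]
      have hm' : (m:ℝ) ≠ 0 := Nat.cast_ne_zero.mpr hm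
      have key : ∀ φ : ℝ, HasDerivAt (fun φ : ℝ => Real.sin ((m:ℝ) * φ) / m)
          (Real.cos ((m:ℝ) * φ)) φ := by
        intro φ
        have h0 : HasDerivAt (fun x : ℝ => (m:ℝ) * x) (m:ℝ) φ := by
          simpa using (hasDerivAt_id φ).const_mul (m:ℝ)
        have h1 := ((Real.hasDerivAt_sin ((m:ℝ) * φ)).comp φ h0).div_const (m:ℝ)
        have h2 : Real.cos ((m:ℝ) * φ) = Real.cos ((m:ℝ) * φ) * (m:ℝ) / (m:ℝ) := by
          field_simp
        rw [h2]; exact h1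
      have hint : IntervalIntegrable (fun x : ℝ => Real.cos ((m:ℝ) * x)) volume (-π) π :=
        (Real.continuous_cos.comp (continuous_const.mul continuous_id)).intervalIntegrable _ _
      rw [intervalIntegral.integral_eq_sub_of_hasDerivAt (fun x _ => key x) hint]
      have z1 : Real.sin ((m:ℝ) * π) = 0 := by
        rw [show (m:ℝ) * π = ((m:ℤ):ℝ) * π by push_cast; ring]; exact Real.sin_int_mul_pi _
      have z2 : Real.sin ((m:ℝ) * (-π)) = 0 := by
        rw [mul_neg, Real.sin_neg, z1, neg_zero]
      rw [z1, z2]; ring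
  · subst h
    rw [intervalIntegral.integral_congr (g := fun x => Real.sin ((m:ℝ) * x))
      (fun x _ => Phi_neg_one_eq m x)]
    rw [if_neg (fun hcon => by exact absurd hcon.1 (by decide))]
    refine integral_odd_zero (Real.continuous_sin.comp (continuous_const.mul continuous_id)) ?_
    intro x; simp [mul_neg]

/-- `q_{n,1}` in terms of `J_n` and thus `A_n`. -/
lemma qh_eq {η₀ : ℝ} (hη₀ : 0 < η₀) (n : ℕ) :
    qh η₀ n 1 = -(Real.sinh η₀ / (4 * Real.sqrt 2)) * Af (Real.cosh η₀) n := by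
  have ht : 1 < Real.cosh η₀ := Real.one_lt_cosh.mpr (ne_of_gt hη₀)
  have hs : 0 < Real.sinh η₀ := by
    have := Real.sinh_lt_sinh.mpr hη₀; simpa using this
  have hJ : (∫ s in (-1:ℝ)..1, (1 - s^2) ^ ((n:ℝ) - 1/2) *
      (Real.cosh η₀ - s) ^ (-((n:ℝ) + ((1:ℕ):ℝ) + 1/2))) = Jf (Real.cosh η₀) n := by
    have := subst_cos ht n ((n:ℝ) + 3/2)
    rw [show ((n:ℝ) + ((1:ℕ):ℝ) + 1/2) = (n:ℝ) + 3/2 by push_cast; ring]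
    exact this.trans rfl
  have hkey := key_ind ht n
  have hGamma : Real.Gamma ((n:ℝ) + ((1:ℕ):ℝ) + 1/2) / Real.Gamma ((n:ℝ) + 1/2)
      = (n:ℝ) + 1/2 := by
    rw [show (n:ℝ) + ((1:ℕ):ℝ) + 1/2 = ((n:ℝ) + 1/2) + 1 by push_cast; ring,
      Real.Gamma_add_one (by positivity)]
    have hg : Real.Gamma ((n:ℝ) + 1/2) ≠ 0 := ne_of_gt (Real.Gamma_pos_of_pos (by positivity))
    field_simp
  have hSqrt : (Real.cosh η₀ ^2 - 1) ^ (((1:ℕ):ℝ)/2) = Real.sinh η₀ := by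
    have h1 : Real.cosh η₀^2 - 1 = Real.sinh η₀ ^ 2 := by
      have := Real.cosh_sq η₀; linarith
    rw [h1, show (((1:ℕ):ℝ)/2) = 1/2 by norm_num, ← Real.sqrt_eq_rpow]
    exact Real.sqrt_sq hs.le
  have hpow : (2:ℝ) ^ ((n:ℝ) + 1/2) = 2^n * Real.sqrt 2 := by
    rw [Real.rpow_add (by norm_num : (0:ℝ) < 2), Real.rpow_natCast, ← Real.sqrt_eq_rpow]
  have h2n : (0:ℝ) < 2^n := by positivity
  have hsq2 : (0:ℝ) < Real.sqrt 2 := Real.sqrt_pos.mpr (by norm_num)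
  rw [qh, Qh, hGamma, hSqrt, hJ, hpow, pow_one]
  rw [div_mul_eq_mul_div, div_mul_eq_mul_div, div_mul_eq_mul_div]
  rw [div_eq_iff (by positivity)]
  field_simp
  linear_combination 2 * hkey

/-- Interchange of `tsum` and interval integral under a summable uniform bound. -/
lemma swap_tsum_integral {ι : Type*} [Countable ι] (F : ι → ℝ → ℝ) (C : ι → ℝ)
    (hcont : ∀ i, Continuous (F i)) (hC : ∀ i x, |F i x| ≤ C i) (hsumC : Summable C) :
    (∫ x in (-π)..π, ∑' i, F i x) = ∑' i, ∫ x in (-π)..π, F i x := by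
  have hab : (-π) ≤ π := by linarith [Real.pi_pos]
  have h1 : ∀ i, IntegrableOn (F i) (Ioc (-π) π) volume := fun i => (hcont i).integrableOn_Ioc
  have hvol : (volume (Ioc (-π) π)).toReal = 2*π := by
    rw [Real.volume_Ioc, ENNReal.toReal_ofReal (by linarith [Real.pi_pos])]; ring
  have h2 : Summable (fun i => ∫ x in Ioc (-π) π, ‖F i x‖) := by
    refine Summable.of_nonneg_of_le (fun i => ?_) (fun i => ?_) (hsumC.mul_left (2*π))
    · exact MeasureTheory.integral_nonneg (fun x => norm_nonneg _)
    · calc (∫ x in Ioc (-π) π, ‖F i x‖) ≤ ∫ _x in Ioc (-π) π, C i := by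
            refine MeasureTheory.integral_mono ((h1 i).norm)
              ((MeasureTheory.integrableOn_const_iff).mpr (Or.inr ?_)) (fun x => hC i x)
            rw [Real.volume_Ioc]; exact ENNReal.ofReal_lt_top
        _ = (2*π) * C i := by
            rw [MeasureTheory.setIntegral_const, measureReal_def, hvol, smul_eq_mul]
  have hmain := MeasureTheory.integral_tsum_of_summable_integral_norm h1 h2
  rw [intervalIntegral.integral_of_le hab, ← hmain]
  exact tsum_congr fun i => (intervalIntegral.integral_of_le hab).symm

lemma adm_slice (n : ℕ) : Admissible n 0 1 1 :=
  ⟨Or.inl rfl, Or.inl rfl, fun h => absurd h.2 (by decide), fun h => absurd h.2 (by decide)⟩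

lemma Af_bound {t : ℝ} (ht : 1 < t) (n : ℕ) :
    |Af t n| ≤ (t - 1) ^ (-(3/2:ℝ)) * (2*π) := by
  have hb : ∀ x ∈ Set.uIoc (-π) π, ‖Real.cos ((n:ℝ) * x) * (t - Real.cos x) ^ (-(3/2:ℝ))‖
      ≤ (t - 1) ^ (-(3/2:ℝ)) := by
    intro x _
    rw [Real.norm_eq_abs, abs_mul]
    have h1 : 0 < t - 1 := by linarith
    have h2 : 0 < t - Real.cos x := tc_pos ht x
    have h3 : (t - Real.cos x) ^ (-(3/2:ℝ)) ≤ (t - 1) ^ (-(3/2:ℝ)) := by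
      rw [Real.rpow_neg h1.le, Real.rpow_neg h2.le]
      exact inv_anti₀ (Real.rpow_pos_of_pos h1 _)
        (Real.rpow_le_rpow h1.le (by linarith [Real.cos_le_one x]) (by norm_num))
    have h4 : |(t - Real.cos x) ^ (-(3/2:ℝ))| = (t - Real.cos x) ^ (-(3/2:ℝ)) :=
      abs_of_pos (Real.rpow_pos_of_pos h2 _)
    calc |Real.cos ((n:ℝ) * x)| * |(t - Real.cos x) ^ (-(3/2:ℝ))|
        ≤ 1 * |(t - Real.cos x) ^ (-(3/2:ℝ))| := by
          apply mul_le_mul_of_nonneg_right (Real.abs_cos_le_one _) (abs_nonneg _)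
      _ = (t - Real.cos x) ^ (-(3/2:ℝ)) := by rw [one_mul, h4]
      _ ≤ (t - 1) ^ (-(3/2:ℝ)) := h3
  have := intervalIntegral.norm_integral_le_of_norm_le_const hb
  rw [Real.norm_eq_abs] at this
  calc |Af t n| ≤ (t - 1) ^ (-(3/2:ℝ)) * |π - (-π)| := this
    _ = (t - 1) ^ (-(3/2:ℝ)) * (2*π) := by
        rw [abs_of_pos (by linarith [Real.pi_pos])]; ring

end auxCompat2

set_option maxHeartbeats 2000000 in
/-- surface integral of the Neumann datum and the compatibility
condition in terms of the Fourier coefficients. -/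
theorem compatibility_condition (η₀ : ℝ) (hη₀ : 0 < η₀)
    (b : ℕ → ℕ → ℤ → ℤ → ℝ)
    (hb : Summable (fun q : {p : ℕ × ℕ × ℤ × ℤ // Admissible p.1 p.2.1 p.2.2.1 p.2.2.2} =>
      |b q.1.1 q.1.2.1 q.1.2.2.1 q.1.2.2.2|))
    (h : ℝ → ℝ → ℝ)
    (hdef : ∀ θ φ, h θ φ =
      Real.sqrt (Real.cosh η₀ - Real.cos θ) *
        ∑' q : {p : ℕ × ℕ × ℤ × ℤ // Admissible p.1 p.2.1 p.2.2.1 p.2.2.2},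
          b q.1.1 q.1.2.1 q.1.2.2.1 q.1.2.2.2 *
            Phi q.1.2.2.1 ((q.1.1 : ℤ)) θ * Phi q.1.2.2.2 ((q.1.2.1 : ℤ)) φ) :
    Summable (fun n : ℕ => |b n 0 1 1 * qh η₀ n 1|) ∧
    (∫ φ in (-π)..π, ∫ θ in (-π)..π,
        h θ φ * (Real.sinh η₀ / (Real.cosh η₀ - Real.cos θ) ^ 2)) =
      -8 * Real.sqrt 2 * π * ∑' n : ℕ, b n 0 1 1 * qh η₀ n 1 ∧
    ((∫ φ in (-π)..π, ∫ θ in (-π)..π,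
        h θ φ * (Real.sinh η₀ / (Real.cosh η₀ - Real.cos θ) ^ 2)) = 0 ↔
      ∑' n : ℕ, qh η₀ n 1 * b n 0 1 1 = 0) := by
  classical
  have ht : 1 < Real.cosh η₀ := Real.one_lt_cosh.mpr (ne_of_gt hη₀)
  have hs : 0 < Real.sinh η₀ := by
    have := Real.sinh_lt_sinh.mpr hη₀; simpa using this
  set t : ℝ := Real.cosh η₀ with htt
  set s₀ : ℝ := Real.sinh η₀ with hss
  have ht1 : (0:ℝ) < t - 1 := by linarith
  set G : ℝ := s₀ * (t - 1) ^ (-(3/2:ℝ)) with hG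
  have hGpos : 0 < G := mul_pos hs (Real.rpow_pos_of_pos ht1 _)
  have hpi : (0:ℝ) < π := Real.pi_pos
  -- weight function identities
  have hWb : ∀ θ : ℝ, 0 < s₀ * (t - Real.cos θ) ^ (-(3/2:ℝ)) ∧
      s₀ * (t - Real.cos θ) ^ (-(3/2:ℝ)) ≤ G := by
    intro θ
    have hv := tc_pos ht θ
    constructor
    · exact mul_pos hs (Real.rpow_pos_of_pos hv _)
    · refine mul_le_mul_of_nonneg_left ?_ hs.le
      rw [Real.rpow_neg ht1.le, Real.rpow_neg hv.le]
      exact inv_anti₀ (Real.rpow_pos_of_pos ht1 _)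
        (Real.rpow_le_rpow ht1.le (by linarith [Real.cos_le_one θ]) (by norm_num))
  have hW : ∀ θ : ℝ, Real.sqrt (t - Real.cos θ) * (s₀ / (t - Real.cos θ)^2)
      = s₀ * (t - Real.cos θ) ^ (-(3/2:ℝ)) := by
    intro θ
    have hv := tc_pos ht θ
    have e1 : s₀ / (t - Real.cos θ)^2 = s₀ * (t - Real.cos θ) ^ (-(2:ℝ)) := by
      rw [div_eq_mul_inv]
      congr 1
      rw [← Real.rpow_natCast (t - Real.cos θ) 2, ← Real.rpow_neg hv.le]
      norm_num
    rw [e1, Real.sqrt_eq_rpow, ← mul_assoc, mul_comm ((t - Real.cos θ) ^ (1/2:ℝ)) s₀,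
      mul_assoc, ← Real.rpow_add hv]
    norm_num
  -- the summand family
  set B : {p : ℕ × ℕ × ℤ × ℤ // Admissible p.1 p.2.1 p.2.2.1 p.2.2.2} → ℝ :=
    fun q => b q.1.1 q.1.2.1 q.1.2.2.1 q.1.2.2.2 with hB
  set g : {p : ℕ × ℕ × ℤ × ℤ // Admissible p.1 p.2.1 p.2.2.1 p.2.2.2} → ℝ → ℝ → ℝ :=
    fun q θ φ => B q * Phi q.1.2.2.1 (q.1.1:ℤ) θ * Phi q.1.2.2.2 (q.1.2.1:ℤ) φ *
      (s₀ * (t - Real.cos θ) ^ (-(3/2:ℝ))) with hg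
  have hgcont : ∀ q φ, Continuous (fun θ => g q θ φ) := by
    intro q φ
    exact (((continuous_const.mul (Phi_continuous _ _)).mul continuous_const).mul
      (continuous_const.mul (cont_tc ht (3/2))))
  have hgabs : ∀ q θ φ, |g q θ φ| ≤ |B q| * G := by
    intro q θ φ
    have h1 := hWb θ
    rw [hg]
    simp only []
    rw [abs_mul, abs_mul, abs_mul]
    have e0 : |s₀ * (t - Real.cos θ) ^ (-(3/2:ℝ))| = s₀ * (t - Real.cos θ) ^ (-(3/2:ℝ)) :=
      abs_of_pos h1.1
    calc |B q| * |Phi q.1.2.2.1 (q.1.1:ℤ) θ| * |Phi q.1.2.2.2 (q.1.2.1:ℤ) φ| *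
          |s₀ * (t - Real.cos θ) ^ (-(3/2:ℝ))|
        ≤ |B q| * 1 * 1 * G := by
          refine mul_le_mul (mul_le_mul (mul_le_mul le_rfl (Phi_abs_le _ _ _)
            (abs_nonneg _) (abs_nonneg _)) (Phi_abs_le _ _ _) (abs_nonneg _)
            (by positivity)) (by rw [e0]; exact h1.2) (abs_nonneg _) (by positivity)
      _ = |B q| * G := by ring
  -- pointwise expansion of the integrand
  have E1 : ∀ θ φ, h θ φ * (s₀ / (t - Real.cos θ)^2) = ∑' q, g q θ φ := by
    intro θ φ
    rw [hdef θ φ]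
    calc Real.sqrt (t - Real.cos θ) *
          (∑' q : {p : ℕ × ℕ × ℤ × ℤ // Admissible p.1 p.2.1 p.2.2.1 p.2.2.2},
            b q.1.1 q.1.2.1 q.1.2.2.1 q.1.2.2.2 *
              Phi q.1.2.2.1 ((q.1.1 : ℤ)) θ * Phi q.1.2.2.2 ((q.1.2.1 : ℤ)) φ) *
          (s₀ / (t - Real.cos θ)^2)
        = (s₀ * (t - Real.cos θ) ^ (-(3/2:ℝ))) *
            ∑' q : {p : ℕ × ℕ × ℤ × ℤ // Admissible p.1 p.2.1 p.2.2.1 p.2.2.2},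
              b q.1.1 q.1.2.1 q.1.2.2.1 q.1.2.2.2 *
                Phi q.1.2.2.1 ((q.1.1 : ℤ)) θ * Phi q.1.2.2.2 ((q.1.2.1 : ℤ)) φ := by
          rw [← hW θ]; ring
      _ = ∑' q, (s₀ * (t - Real.cos θ) ^ (-(3/2:ℝ))) *
            (b q.1.1 q.1.2.1 q.1.2.2.1 q.1.2.2.2 *
              Phi q.1.2.2.1 ((q.1.1 : ℤ)) θ * Phi q.1.2.2.2 ((q.1.2.1 : ℤ)) φ) := by
          rw [tsum_mul_left]
      _ = ∑' q, g q θ φ := tsum_congr (fun q => by rw [hg]; ring)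
  -- the θ-integrals
  set KK : {p : ℕ × ℕ × ℤ × ℤ // Admissible p.1 p.2.1 p.2.2.1 p.2.2.2} → ℝ :=
    fun q => ∫ θ in (-π)..π, Phi q.1.2.2.1 (q.1.1:ℤ) θ *
      (s₀ * (t - Real.cos θ) ^ (-(3/2:ℝ))) with hKK
  have hKKcont : ∀ (ν : ℤ) (n : ℕ),
      Continuous (fun θ => Phi ν (n:ℤ) θ * (s₀ * (t - Real.cos θ) ^ (-(3/2:ℝ)))) :=
    fun ν n => (Phi_continuous _ _).mul (continuous_const.mul (cont_tc ht (3/2)))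
  have hKKb : ∀ q, |KK q| ≤ G * (2*π) := by
    intro q
    have hbd : ∀ x ∈ Set.uIoc (-π) π, ‖Phi q.1.2.2.1 (q.1.1:ℤ) x *
        (s₀ * (t - Real.cos x) ^ (-(3/2:ℝ)))‖ ≤ G := by
      intro x _
      rw [Real.norm_eq_abs, abs_mul, abs_of_pos (hWb x).1]
      calc |Phi q.1.2.2.1 (q.1.1:ℤ) x| * (s₀ * (t - Real.cos x) ^ (-(3/2:ℝ)))
          ≤ 1 * G := mul_le_mul (Phi_abs_le _ _ _) (hWb x).2 (hWb x).1.le zero_le_one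
        _ = G := one_mul G
    have := intervalIntegral.norm_integral_le_of_norm_le_const hbd
    rw [Real.norm_eq_abs] at this
    calc |KK q| ≤ G * |π - (-π)| := this
      _ = G * (2*π) := by rw [abs_of_pos (by linarith)]; ring
  -- inner integral evaluation
  have E3 : ∀ q φ, (∫ θ in (-π)..π, g q θ φ) =
      B q * Phi q.1.2.2.2 (q.1.2.1:ℤ) φ * KK q := by
    intro q φ
    have hpt : ∀ θ, g q θ φ = (B q * Phi q.1.2.2.2 (q.1.2.1:ℤ) φ) *
        (Phi q.1.2.2.1 (q.1.1:ℤ) θ * (s₀ * (t - Real.cos θ) ^ (-(3/2:ℝ)))) := by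
      intro θ; rw [hg]; ring
    rw [intervalIntegral.integral_congr (μ := volume) (fun θ _ => hpt θ),
      intervalIntegral.integral_const_mul, hKK, mul_assoc]
  -- inner swap
  have E2 : ∀ φ, (∫ θ in (-π)..π, ∑' q, g q θ φ) = ∑' q, ∫ θ in (-π)..π, g q θ φ := by
    intro φ
    exact swap_tsum_integral (fun q θ => g q θ φ) (fun q => |B q| * G)
      (fun q => hgcont q φ) (fun q θ => hgabs q θ φ) (hb.mul_right G)
  -- outer family
  set Fo : {p : ℕ × ℕ × ℤ × ℤ // Admissible p.1 p.2.1 p.2.2.1 p.2.2.2} → ℝ → ℝ :=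
    fun q φ => B q * Phi q.1.2.2.2 (q.1.2.1:ℤ) φ * KK q with hFo
  have hFocont : ∀ q, Continuous (Fo q) :=
    fun q => ((continuous_const.mul (Phi_continuous _ _)).mul continuous_const)
  have hFoabs : ∀ q φ, |Fo q φ| ≤ |B q| * (G * (2*π)) := by
    intro q φ
    rw [hFo]
    simp only []
    rw [abs_mul, abs_mul]
    calc |B q| * |Phi q.1.2.2.2 (q.1.2.1:ℤ) φ| * |KK q|
        ≤ |B q| * 1 * (G * (2*π)) := by
          refine mul_le_mul (mul_le_mul le_rfl (Phi_abs_le _ _ _) (abs_nonneg _)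
            (abs_nonneg _)) (hKKb q) (abs_nonneg _) (by positivity)
      _ = |B q| * (G * (2*π)) := by ring
  have E4 : (∫ φ in (-π)..π, ∑' q, Fo q φ) = ∑' q, ∫ φ in (-π)..π, Fo q φ :=
    swap_tsum_integral Fo (fun q => |B q| * (G * (2*π)))
      hFocont hFoabs (hb.mul_right _)
  -- φ-integral evaluation
  have E5 : ∀ q, (∫ φ in (-π)..π, Fo q φ) =
      B q * KK q * (if q.1.2.2.2 = 1 ∧ q.1.2.1 = 0 then 2*π else 0) := by
    intro q
    have hpt : ∀ φ, Fo q φ = (B q * KK q) * Phi q.1.2.2.2 (q.1.2.1:ℤ) φ := by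
      intro φ; rw [hFo]; ring
    rw [intervalIntegral.integral_congr (μ := volume) (fun φ _ => hpt φ),
      intervalIntegral.integral_const_mul, phi_integral _ _ q.2.2.1]
  -- KK evaluation
  have E6 : ∀ q, q.1.2.2.1 = 1 → KK q = s₀ * Af t q.1.1 := by
    intro q hq
    rw [hKK]
    simp only [hq]
    have hpt : ∀ θ, Phi 1 (q.1.1:ℤ) θ * (s₀ * (t - Real.cos θ) ^ (-(3/2:ℝ)))
        = s₀ * (Real.cos ((q.1.1:ℝ) * θ) * (t - Real.cos θ) ^ (-(3/2:ℝ))) := by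
      intro θ; rw [Phi_one_eq]; ring
    rw [intervalIntegral.integral_congr (μ := volume) (fun θ _ => hpt θ),
      intervalIntegral.integral_const_mul]
    rfl
  have E6' : ∀ q, q.1.2.2.1 = -1 → KK q = 0 := by
    intro q hq
    rw [hKK]
    simp only [hq]
    refine integral_odd_zero (hKKcont (-1) q.1.1) ?_
    intro x
    rw [Phi_neg_one_eq, Phi_neg_one_eq, Real.cos_neg, mul_neg, Real.sin_neg]
    ring
  -- reindexing
  have adm1 : ∀ n : ℕ, Admissible n 0 1 1 := adm_slice
  set e : ℕ → {p : ℕ × ℕ × ℤ × ℤ // Admissible p.1 p.2.1 p.2.2.1 p.2.2.2} :=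
    fun n => ⟨(n, 0, 1, 1), adm1 n⟩ with he
  have einj : Function.Injective e := by
    intro a b hab
    have := congrArg (fun q => q.1.1) hab
    exact this
  set T : {p : ℕ × ℕ × ℤ × ℤ // Admissible p.1 p.2.1 p.2.2.1 p.2.2.2} → ℝ :=
    fun q => B q * KK q * (if q.1.2.2.2 = 1 ∧ q.1.2.1 = 0 then 2*π else 0) with hT
  set g' : ℕ → ℝ := fun n => b n 0 1 1 * (s₀ * Af t n) * (2*π) with hg'
  have hTval : ∀ q, T q = B q * KK q *
      (if q.1.2.2.2 = 1 ∧ q.1.2.1 = 0 then 2*π else 0) := fun q => rfl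
  have hTe : ∀ n : ℕ, T (e n) = g' n := by
    intro n
    have hcond : ((e n).1.2.2.2 = 1 ∧ (e n).1.2.1 = 0) := ⟨rfl, rfl⟩
    rw [hTval, if_pos hcond, E6 (e n) rfl]
  have E7 : ∑' q, T q = ∑' n, g' n := by
    refine tsum_eq_tsum_of_ne_zero_bij (fun x => e x.1) ?_ ?_ ?_
    · intro x y hxy
      exact Subtype.ext (einj hxy)
    · intro q hq
      have hν : q.1.2.2.1 = 1 := by
        rcases q.2.1 with h | h
        · exact h
        · exfalso; apply hq; rw [hTval, E6' q h]; ring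
      have hif : q.1.2.2.2 = 1 ∧ q.1.2.1 = 0 := by
        by_contra hcon
        apply hq
        rw [hTval, if_neg hcon]; ring
      have hqe : q = e q.1.1 := by
        refine Subtype.ext ?_
        have h1 : q.1 = (q.1.1, q.1.2.1, q.1.2.2.1, q.1.2.2.2) := rfl
        rw [h1, hif.2, hν, hif.1]
      have hgne : g' q.1.1 ≠ 0 := by
        rw [← hTe q.1.1, ← hqe]; exact hq
      exact ⟨⟨q.1.1, hgne⟩, hqe.symm⟩
    · intro x
      exact hTe x.1
  -- the combined integral identity
  have hI : (∫ φ in (-π)..π, ∫ θ in (-π)..π,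
      h θ φ * (s₀ / (t - Real.cos θ) ^ 2)) = ∑' n, g' n := by
    have hout : ∀ φ, (∫ θ in (-π)..π, h θ φ * (s₀ / (t - Real.cos θ) ^ 2))
        = ∑' q, Fo q φ := by
      intro φ
      rw [intervalIntegral.integral_congr (μ := volume) (fun θ _ => E1 θ φ), E2 φ]
      exact tsum_congr (fun q => E3 q φ)
    rw [intervalIntegral.integral_congr (μ := volume) (fun φ _ => hout φ), E4, ← E7]
    exact tsum_congr E5
  -- per-term comparison with qh
  have hterm : ∀ n : ℕ, g' n = (-8 * Real.sqrt 2 * π) * (b n 0 1 1 * qh η₀ n 1) := by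
    intro n
    rw [hg', qh_eq hη₀ n, ← htt, ← hss]
    simp only []
    have hsq2 : (0:ℝ) < Real.sqrt 2 := Real.sqrt_pos.mpr (by norm_num)
    have hsqsq : Real.sqrt 2 * Real.sqrt 2 = 2 := Real.mul_self_sqrt (by norm_num)
    field_simp
    ring_nf
  have hI2 : (∫ φ in (-π)..π, ∫ θ in (-π)..π,
      h θ φ * (s₀ / (t - Real.cos θ) ^ 2)) =
      -8 * Real.sqrt 2 * π * ∑' n, b n 0 1 1 * qh η₀ n 1 := by
    rw [hI, ← tsum_mul_left]
    exact tsum_congr hterm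
  -- summability part
  have hAb : ∀ n : ℕ, |qh η₀ n 1| ≤ s₀ / (4 * Real.sqrt 2) * ((t-1) ^ (-(3/2:ℝ)) * (2*π)) := by
    intro n
    rw [qh_eq hη₀ n, ← htt, ← hss]
    have hsq2 : (0:ℝ) < Real.sqrt 2 := Real.sqrt_pos.mpr (by norm_num)
    rw [abs_mul, abs_neg, abs_of_pos (by positivity : (0:ℝ) < s₀ / (4 * Real.sqrt 2))]
    exact mul_le_mul_of_nonneg_left (Af_bound ht n) (by positivity)
  have hbn : Summable (fun n : ℕ => |b n 0 1 1|) := hb.comp_injective einj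
  have hsum1 : Summable (fun n : ℕ => |b n 0 1 1 * qh η₀ n 1|) := by
    refine Summable.of_nonneg_of_le (fun n => abs_nonneg _) (fun n => ?_)
      (hbn.mul_right (s₀ / (4 * Real.sqrt 2) * ((t-1) ^ (-(3/2:ℝ)) * (2*π))))
    rw [abs_mul]
    exact mul_le_mul_of_nonneg_left (hAb n) (abs_nonneg _)
  refine ⟨hsum1, hI2, ?_⟩
  rw [hI2]
  have hsq2 : (0:ℝ) < Real.sqrt 2 := Real.sqrt_pos.mpr (by norm_num)
  have hc : (-8 * Real.sqrt 2 * π) ≠ 0 := by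
    have : (0:ℝ) < 8 * Real.sqrt 2 * π := by positivity
    intro hcon
    nlinarith
  constructor
  · intro h0
    have := mul_eq_zero.mp h0
    rcases this with h1 | h1
    · exact absurd h1 hc
    · rw [← h1]
      exact tsum_congr (fun n => mul_comm _ _)
  · intro h0
    have : (∑' n, b n 0 1 1 * qh η₀ n 1) = 0 := by
      rw [← h0]
      exact tsum_congr (fun n => mul_comm _ _)
    rw [this, mul_zero]
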